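/- Let (Ω,μ) be a measure space, H a complex inner product space, and B : H × H → L¹(Ω,μ) a map that is conjugate-linear in the first argument and linear in the second argument, such that for every ψ ∈ H the function B(ψ,ψ) is nonnegative μ-almost everywhere. Then for all ψ, φ ∈ H one has |B(ψ,φ)(ω)| ≤ √(B(ψ,ψ)(ω) · B(φ,φ)(ω)) for μ-almost every ω, and consequently ‖B(ψ,φ)‖_{L¹} ≤ √(‖B(ψ,ψ)‖_{L¹} · ‖B(φ,φ)‖_{L¹}). -/

import Mathlib

open MeasureTheory
open scoped ComplexConjugate ComplexOrder

lemma aux_cs {A x y D : ℂ}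
    (h : ∀ c : ℂ, 0 ≤ A + c * x + (conj c) * y + (conj c) * c * D) :
    ‖x‖ ≤ Real.sqrt (A.re * D.re) := by
  have hre : ∀ c : ℂ, 0 ≤ (A + c * x + conj c * y + conj c * c * D).re :=
    fun c => (Complex.le_def.1 (h c)).1
  have him : ∀ c : ℂ, (A + c * x + conj c * y + conj c * c * D).im = 0 :=
    fun c => ((Complex.le_def.1 (h c)).2).symm
  have h00 := him 0
  have h1 := him 1
  have hm1 := him (-1)
  have hI := him Complex.I
  simp [Complex.add_im, Complex.mul_im] at h00 h1 hm1 hI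
  have hDim : D.im = 0 := by linarith
  have hyre : y.re = x.re := by linarith
  have hyim : y.im = -x.im := by linarith
  set n : ℝ := x.re ^ 2 + x.im ^ 2 with hn
  have hquad : ∀ t : ℝ, 0 ≤ (n * D.re) * (t * t) + (2 * n) * t + A.re := by
    intro t
    rw [hn]
    have := hre ((t : ℂ) * conj x)
    simp [Complex.add_re, Complex.mul_re, Complex.mul_im, hyre, hyim] at this
    nlinarith [this, hDim]
  have hd := discrim_le_zero hquad
  rw [discrim] at hd
  have hA : 0 ≤ A.re := by simpa using hre 0
  rcases eq_or_lt_of_le (by positivity : (0:ℝ) ≤ n) with h0 | h0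
  · have hx : x = 0 := by
      rw [hn] at h0
      apply Complex.ext <;> simp <;> nlinarith [sq_nonneg x.re, sq_nonneg x.im]
    simp [hx, Real.sqrt_nonneg]
  · have hn2 : n ≤ A.re * D.re := by nlinarith
    have hxn : ‖x‖ = Real.sqrt n := by
      rw [hn, show x.re ^ 2 + x.im ^ 2 = Complex.normSq x by rw [Complex.normSq_apply]; ring,
        ← Complex.norm_def]
    rw [hxn]
    exact Real.sqrt_le_sqrt (by linarith)


/-- **Pointwise Cauchy–Schwarz inequality for positive sesquilinear maps with values
in `L¹`.**  Let `(Ω,μ)` be a measure space, `H` a complex inner product space, and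
`B : H × H → L¹(Ω,μ)` conjugate-linear in the first argument and linear in the
second, with `B(ψ,ψ) ≥ 0` `μ`-a.e. for every `ψ`.  Then for all `ψ, φ`,
`|B(ψ,φ)(ω)| ≤ √(B(ψ,ψ)(ω)·B(φ,φ)(ω))` for `μ`-a.e. `ω`, and consequently
`‖B(ψ,φ)‖₁ ≤ √(‖B(ψ,ψ)‖₁·‖B(φ,φ)‖₁)`. -/
theorem pointwise_cauchy_schwarz_L1
    {H Ω : Type*} [NormedAddCommGroup H] [InnerProductSpace ℂ H]
    [MeasurableSpace Ω] (μ : Measure Ω)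
    (B : H → H → Lp ℂ 1 μ)
    (hadd₁ : ∀ ψ ψ' φ : H, B (ψ + ψ') φ = B ψ φ + B ψ' φ)
    (hsmul₁ : ∀ (c : ℂ) (ψ φ : H), B (c • ψ) φ = (conj c) • B ψ φ)
    (hadd₂ : ∀ ψ φ φ' : H, B ψ (φ + φ') = B ψ φ + B ψ φ')
    (hsmul₂ : ∀ (c : ℂ) (ψ φ : H), B ψ (c • φ) = c • B ψ φ)
    (hpos : ∀ ψ : H, ∀ᵐ ω ∂μ, 0 ≤ (B ψ ψ : Ω → ℂ) ω) :
    ∀ ψ φ : H,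
      (∀ᵐ ω ∂μ, ‖(B ψ φ : Ω → ℂ) ω‖ ≤
        Real.sqrt (((B ψ ψ : Ω → ℂ) ω).re * ((B φ φ : Ω → ℂ) ω).re)) ∧
      ‖B ψ φ‖ ≤ Real.sqrt (‖B ψ ψ‖ * ‖B φ φ‖) := by
  intro ψ φ
  have hexp : ∀ c : ℂ, B (ψ + c • φ) (ψ + c • φ)
      = B ψ ψ + c • B ψ φ + (conj c) • B φ ψ + ((conj c) * c) • B φ φ := by
    intro c
    rw [hadd₁, hadd₂, hadd₂, hsmul₂, hsmul₁, hsmul₁, hsmul₂, smul_smul]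
    abel
  have key : ∀ c : ℂ, ∀ᵐ ω ∂μ, 0 ≤ (B ψ ψ : Ω → ℂ) ω + c * (B ψ φ : Ω → ℂ) ω
      + conj c * (B φ ψ : Ω → ℂ) ω + conj c * c * (B φ φ : Ω → ℂ) ω := by
    intro c
    have h1 := hpos (ψ + c • φ)
    rw [hexp c] at h1
    filter_upwards [h1,
      Lp.coeFn_add (B ψ ψ + c • B ψ φ + (conj c) • B φ ψ) (((conj c) * c) • B φ φ),
      Lp.coeFn_add (B ψ ψ + c • B ψ φ) ((conj c) • B φ ψ),
      Lp.coeFn_add (B ψ ψ) (c • B ψ φ),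
      Lp.coeFn_smul c (B ψ φ),
      Lp.coeFn_smul (conj c) (B φ ψ),
      Lp.coeFn_smul ((conj c) * c) (B φ φ)] with ω h1 e1 e2 e3 e4 e5 e6
    rw [e1, Pi.add_apply, e2, Pi.add_apply, e3, Pi.add_apply, e4, e5, e6,
      Pi.smul_apply, Pi.smul_apply, Pi.smul_apply] at h1
    simpa [smul_eq_mul] using h1
  obtain ⟨S, hSc, hSd⟩ := TopologicalSpace.exists_countable_dense ℂ
  have keyS : ∀ᵐ ω ∂μ, ∀ c ∈ S, 0 ≤ (B ψ ψ : Ω → ℂ) ω + c * (B ψ φ : Ω → ℂ) ω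
      + conj c * (B φ ψ : Ω → ℂ) ω + conj c * c * (B φ φ : Ω → ℂ) ω :=
    (ae_ball_iff hSc).2 fun c _ => key c
  have hclosed : IsClosed {z : ℂ | 0 ≤ z} := by
    have : {z : ℂ | 0 ≤ z} = Complex.re ⁻¹' Set.Ici 0 ∩ Complex.im ⁻¹' {0} := by
      ext z; simp [Complex.le_def, eq_comm]
    rw [this]
    exact (isClosed_Ici.preimage Complex.continuous_re).inter
      (isClosed_singleton.preimage Complex.continuous_im)
  have hptwise : ∀ᵐ ω ∂μ, ‖(B ψ φ : Ω → ℂ) ω‖ ≤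
      Real.sqrt (((B ψ ψ : Ω → ℂ) ω).re * ((B φ φ : Ω → ℂ) ω).re) := by
    filter_upwards [keyS] with ω hω
    apply aux_cs (y := (B φ ψ : Ω → ℂ) ω)
    intro c
    set f : ℂ → ℂ := fun c => (B ψ ψ : Ω → ℂ) ω + c * (B ψ φ : Ω → ℂ) ω
      + conj c * (B φ ψ : Ω → ℂ) ω + conj c * c * (B φ φ : Ω → ℂ) ω with hf
    have hfc : Continuous f := by
      simp only [hf, starRingEnd_apply]
      fun_prop
    have hsub : closure S ⊆ f ⁻¹' {z : ℂ | 0 ≤ z} :=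
      closure_minimal (fun d hd => hω d hd) (hclosed.preimage hfc)
    exact hsub (by rw [hSd.closure_eq]; trivial)
  refine ⟨hptwise, ?_⟩
  set F : Ω → ℝ := fun ω => ((B ψ ψ : Ω → ℂ) ω).re with hFdef
  set G : Ω → ℝ := fun ω => ((B φ φ : Ω → ℂ) ω).re with hGdef
  have hFint : Integrable F μ := (L1.integrable_coeFn (B ψ ψ)).re
  have hGint : Integrable G μ := (L1.integrable_coeFn (B φ φ)).re
  have hF0 : 0 ≤ᵐ[μ] F := (hpos ψ).mono fun ω h => by simpa using (Complex.le_def.1 h).1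
  have hG0 : 0 ≤ᵐ[μ] G := (hpos φ).mono fun ω h => by simpa using (Complex.le_def.1 h).1
  have hFnorm : (fun ω => ‖(B ψ ψ : Ω → ℂ) ω‖) =ᵐ[μ] F := (hpos ψ).mono fun ω h => by
    obtain ⟨h1, h2⟩ := Complex.le_def.1 h
    have hb : (B ψ ψ : Ω → ℂ) ω = ((F ω : ℝ) : ℂ) :=
      Complex.ext (by simp [hFdef]) (by simpa using h2.symm)
    simp only [hb, Complex.norm_real]
    exact Real.norm_of_nonneg (by simpa using h1)
  have hGnorm : (fun ω => ‖(B φ φ : Ω → ℂ) ω‖) =ᵐ[μ] G := (hpos φ).mono fun ω h => by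
    obtain ⟨h1, h2⟩ := Complex.le_def.1 h
    have hb : (B φ φ : Ω → ℂ) ω = ((G ω : ℝ) : ℂ) :=
      Complex.ext (by simp [hGdef]) (by simpa using h2.symm)
    simp only [hb, Complex.norm_real]
    exact Real.norm_of_nonneg (by simpa using h1)
  have hnormF : ‖B ψ ψ‖ = ∫ ω, F ω ∂μ := by
    rw [L1.norm_eq_integral_norm]; exact integral_congr_ae hFnorm
  have hnormG : ‖B φ φ‖ = ∫ ω, G ω ∂μ := by
    rw [L1.norm_eq_integral_norm]; exact integral_congr_ae hGnorm
  have hsF : MemLp (fun ω => Real.sqrt (F ω)) 2 μ := by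
    have hm : AEStronglyMeasurable (fun ω => Real.sqrt (F ω)) μ :=
      Real.continuous_sqrt.comp_aestronglyMeasurable hFint.aestronglyMeasurable
    rw [memLp_two_iff_integrable_sq hm]
    exact hFint.congr (hF0.mono fun ω h => (Real.sq_sqrt h).symm)
  have hsG : MemLp (fun ω => Real.sqrt (G ω)) 2 μ := by
    have hm : AEStronglyMeasurable (fun ω => Real.sqrt (G ω)) μ :=
      Real.continuous_sqrt.comp_aestronglyMeasurable hGint.aestronglyMeasurable
    rw [memLp_two_iff_integrable_sq hm]
    exact hGint.congr (hG0.mono fun ω h => (Real.sq_sqrt h).symm)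
  have hprod : Integrable (fun ω => Real.sqrt (F ω) * Real.sqrt (G ω)) μ := by
    have h12 : (1 : ENNReal) / 1 = 1 / 2 + 1 / 2 := by
      rw [ENNReal.add_halves]; norm_num
    have := hsG.smul hsF (r := 1)
    simpa [smul_eq_mul, Pi.mul_def] using memLp_one_iff_integrable.mp this
  have step1 : ‖B ψ φ‖ ≤ ∫ ω, Real.sqrt (F ω) * Real.sqrt (G ω) ∂μ := by
    rw [L1.norm_eq_integral_norm]
    refine integral_mono_ae (L1.integrable_coeFn (B ψ φ)).norm hprod ?_
    filter_upwards [hptwise, hF0, hG0] with ω h1 h2 h3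
    calc ‖(B ψ φ : Ω → ℂ) ω‖ ≤ Real.sqrt (F ω * G ω) := h1
      _ = Real.sqrt (F ω) * Real.sqrt (G ω) := Real.sqrt_mul h2 _
  have hconj : Real.HolderConjugate 2 2 := ⟨by norm_num, by norm_num, by norm_num⟩
  have step2 := integral_mul_le_Lp_mul_Lq_of_nonneg hconj
    (Filter.Eventually.of_forall fun ω => Real.sqrt_nonneg (F ω))
    (Filter.Eventually.of_forall fun ω => Real.sqrt_nonneg (G ω))
    (by simpa using hsF) (by simpa using hsG)
  have hFsq : (fun ω => Real.sqrt (F ω) ^ (2:ℝ)) =ᵐ[μ] F := hF0.mono fun ω h => by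
    show Real.sqrt (F ω) ^ (2:ℝ) = F ω
    rw [show ((2:ℝ) = ((2:ℕ):ℝ)) by norm_num, Real.rpow_natCast, Real.sq_sqrt h]
  have hGsq : (fun ω => Real.sqrt (G ω) ^ (2:ℝ)) =ᵐ[μ] G := hG0.mono fun ω h => by
    show Real.sqrt (G ω) ^ (2:ℝ) = G ω
    rw [show ((2:ℝ) = ((2:ℕ):ℝ)) by norm_num, Real.rpow_natCast, Real.sq_sqrt h]
  rw [integral_congr_ae hFsq, integral_congr_ae hGsq] at step2
  have hintF0 : 0 ≤ ∫ ω, F ω ∂μ := integral_nonneg_of_ae hF0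
  have hfinal : ∫ ω, Real.sqrt (F ω) * Real.sqrt (G ω) ∂μ ≤
      Real.sqrt ((∫ ω, F ω ∂μ) * ∫ ω, G ω ∂μ) := by
    calc ∫ ω, Real.sqrt (F ω) * Real.sqrt (G ω) ∂μ
        ≤ (∫ ω, F ω ∂μ) ^ ((1:ℝ)/2) * (∫ ω, G ω ∂μ) ^ ((1:ℝ)/2) := step2
      _ = Real.sqrt (∫ ω, F ω ∂μ) * Real.sqrt (∫ ω, G ω ∂μ) := by
          rw [Real.sqrt_eq_rpow, Real.sqrt_eq_rpow]
      _ = Real.sqrt ((∫ ω, F ω ∂μ) * ∫ ω, G ω ∂μ) := (Real.sqrt_mul hintF0 _).symm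
  rw [hnormF, hnormG]
  exact step1.trans hfinal
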